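/- For the hypersurface {r = 0} ⊂ ℂ³ with r(z₁,z₂,z₃) = Re(z₁) + |z₂|²·Re(z₂² − z₃³) + |z₃|²·Re(z₃²) − Re(z₂²·conj(z₃)), every regular (nonsingular) holomorphic curve γ through 0 satisfies ν(r∘γ)(0) ≤ 4, and the value 4 is attained; hence the regular type of 0 equals 4, while the singular type of 0 is infinite (witnessed by the curve t ↦ (0, t³, t²) lying in {r = 0}). -/

import Mathlib

open Complex Filter Topology

/-- Wirtinger derivative ∂/∂t of a function of one complex variable. -/
noncomputable def wd (f : ℂ → ℂ) : ℂ → ℂ := fun t =>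
  (fderiv ℝ f t 1 - Complex.I * fderiv ℝ f t Complex.I) / 2

/-- Wirtinger derivative ∂/∂t̄ of a function of one complex variable. -/
noncomputable def wdbar (f : ℂ → ℂ) : ℂ → ℂ := fun t =>
  (fderiv ℝ f t 1 + Complex.I * fderiv ℝ f t Complex.I) / 2

/-- D^{a,b}[f] = (∂/∂t)^a (∂/∂t̄)^b f. -/
noncomputable def Dab (a b : ℕ) (f : ℂ → ℂ) : ℂ → ℂ := wd^[a] (wdbar^[b] f)

noncomputable def rDef (z₁ z₂ z₃ : ℂ) : ℝ :=
  z₁.re + ‖z₂‖ ^ 2 * (z₂ ^ 2 - z₃ ^ 3).re + ‖z₃‖ ^ 2 * (z₃ ^ 2).re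
    - (z₂ ^ 2 * (starRingEnd ℂ) z₃).re

lemma hasFDerivAt_term (c : ℂ) (g h : ℂ → ℂ) (t : ℂ)
    (hg : DifferentiableAt ℂ g t) (hh : DifferentiableAt ℂ h t) :
    HasFDerivAt (fun s => c * (g s * (starRingEnd ℂ) (h s)))
      (c • ((g t) • ((Complex.conjCLE.toContinuousLinearMap).comp
          (((1 : ℂ →L[ℂ] ℂ).smulRight (deriv h t)).restrictScalars ℝ))
        + ((starRingEnd ℂ) (h t)) • (((1 : ℂ →L[ℂ] ℂ).smulRight (deriv g t)).restrictScalars ℝ))) t := by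
  have Hg : HasFDerivAt g (((1 : ℂ →L[ℂ] ℂ).smulRight (deriv g t)).restrictScalars ℝ) t :=
    (hg.hasDerivAt.hasFDerivAt).restrictScalars ℝ
  have Hh : HasFDerivAt h (((1 : ℂ →L[ℂ] ℂ).smulRight (deriv h t)).restrictScalars ℝ) t :=
    (hh.hasDerivAt.hasFDerivAt).restrictScalars ℝ
  have Hch : HasFDerivAt (fun s => (starRingEnd ℂ) (h s))
      ((Complex.conjCLE.toContinuousLinearMap).comp
        (((1 : ℂ →L[ℂ] ℂ).smulRight (deriv h t)).restrictScalars ℝ)) t :=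
    (Complex.conjCLE.hasFDerivAt).comp t Hh
  exact (Hg.mul Hch).const_mul c

lemma fderiv_term_apply (c : ℂ) (g h : ℂ → ℂ) (t v : ℂ)
    (hg : DifferentiableAt ℂ g t) (hh : DifferentiableAt ℂ h t) :
    fderiv ℝ (fun s => c * (g s * (starRingEnd ℂ) (h s))) t v
      = c * (deriv g t * v * (starRingEnd ℂ) (h t) + g t * (starRingEnd ℂ) (deriv h t * v)) := by
  rw [(hasFDerivAt_term c g h t hg hh).fderiv]
  simp [map_mul, smul_eq_mul]
  ring

lemma wd_term (c : ℂ) (g h : ℂ → ℂ) (t : ℂ)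
    (hg : DifferentiableAt ℂ g t) (hh : DifferentiableAt ℂ h t) :
    wd (fun s => c * (g s * (starRingEnd ℂ) (h s))) t
      = c * (deriv g t * (starRingEnd ℂ) (h t)) := by
  unfold wd
  rw [fderiv_term_apply c g h t 1 hg hh, fderiv_term_apply c g h t Complex.I hg hh]
  simp [map_mul, Complex.conj_I]
  ring_nf
  rw [Complex.I_sq]
  ring

lemma wdbar_term (c : ℂ) (g h : ℂ → ℂ) (t : ℂ)
    (hg : DifferentiableAt ℂ g t) (hh : DifferentiableAt ℂ h t) :
    wdbar (fun s => c * (g s * (starRingEnd ℂ) (h s))) t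
      = c * (g t * (starRingEnd ℂ) (deriv h t)) := by
  unfold wdbar
  rw [fderiv_term_apply c g h t 1 hg hh, fderiv_term_apply c g h t Complex.I hg hh]
  simp [map_mul, Complex.conj_I]
  ring_nf
  rw [Complex.I_sq]
  ring

lemma wd_sum_term {n : ℕ} (c : Fin n → ℂ) (g h : Fin n → ℂ → ℂ) (t : ℂ)
    (hg : ∀ i, DifferentiableAt ℂ (g i) t) (hh : ∀ i, DifferentiableAt ℂ (h i) t) :
    wd (fun s => ∑ i, c i * (g i s * (starRingEnd ℂ) (h i s))) t
      = ∑ i, c i * (deriv (g i) t * (starRingEnd ℂ) (h i t)) := by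
  have hd : ∀ i ∈ Finset.univ, DifferentiableAt ℝ
      (fun s => c i * (g i s * (starRingEnd ℂ) (h i s))) t :=
    fun i _ => (hasFDerivAt_term (c i) (g i) (h i) t (hg i) (hh i)).differentiableAt
  unfold wd
  rw [fderiv_fun_sum hd]
  simp only [ContinuousLinearMap.coe_sum', Finset.sum_apply, Finset.mul_sum,
    ← Finset.sum_sub_distrib]
  rw [Finset.sum_div]
  refine Finset.sum_congr rfl fun i _ => ?_
  have := wd_term (c i) (g i) (h i) t (hg i) (hh i)
  unfold wd at this
  rw [← this, (hasFDerivAt_term (c i) (g i) (h i) t (hg i) (hh i)).fderiv]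

lemma wdbar_sum_term {n : ℕ} (c : Fin n → ℂ) (g h : Fin n → ℂ → ℂ) (t : ℂ)
    (hg : ∀ i, DifferentiableAt ℂ (g i) t) (hh : ∀ i, DifferentiableAt ℂ (h i) t) :
    wdbar (fun s => ∑ i, c i * (g i s * (starRingEnd ℂ) (h i s))) t
      = ∑ i, c i * (g i t * (starRingEnd ℂ) (deriv (h i) t)) := by
  have hd : ∀ i ∈ Finset.univ, DifferentiableAt ℝ
      (fun s => c i * (g i s * (starRingEnd ℂ) (h i s))) t :=
    fun i _ => (hasFDerivAt_term (c i) (g i) (h i) t (hg i) (hh i)).differentiableAt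
  unfold wdbar
  rw [fderiv_fun_sum hd]
  simp only [ContinuousLinearMap.coe_sum', Finset.sum_apply, Finset.mul_sum,
    ← Finset.sum_add_distrib]
  rw [Finset.sum_div]
  refine Finset.sum_congr rfl fun i _ => ?_
  have := wdbar_term (c i) (g i) (h i) t (hg i) (hh i)
  unfold wdbar at this
  rw [← this, (hasFDerivAt_term (c i) (g i) (h i) t (hg i) (hh i)).fderiv]


lemma wd_congr {F G : ℂ → ℂ} {x : ℂ} (h : F =ᶠ[𝓝 x] G) : wd F =ᶠ[𝓝 x] wd G := by
  filter_upwards [h.eventually_nhds] with t ht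
  unfold wd
  rw [Filter.EventuallyEq.fderiv_eq ht]

lemma wdbar_congr {F G : ℂ → ℂ} {x : ℂ} (h : F =ᶠ[𝓝 x] G) : wdbar F =ᶠ[𝓝 x] wdbar G := by
  filter_upwards [h.eventually_nhds] with t ht
  unfold wdbar
  rw [Filter.EventuallyEq.fderiv_eq ht]

lemma wd_iterate_congr {F G : ℂ → ℂ} {x : ℂ} (h : F =ᶠ[𝓝 x] G) (a : ℕ) :
    wd^[a] F =ᶠ[𝓝 x] wd^[a] G := by
  induction a with
  | zero => exact h
  | succ a ih => rw [Function.iterate_succ_apply', Function.iterate_succ_apply']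
                 exact wd_congr ih

lemma AnalyticAt.derivC {f : ℂ → ℂ} {x : ℂ} (h : AnalyticAt ℂ f x) :
    AnalyticAt ℂ (deriv f) x := by
  have h2 : AnalyticAt ℂ (fun y => (ContinuousLinearMap.apply ℂ ℂ (1 : ℂ)) (fderiv ℂ f y)) x :=
    ((ContinuousLinearMap.apply ℂ ℂ (1 : ℂ)).analyticAt _).comp h.fderiv
  have he : deriv f = fun y => (ContinuousLinearMap.apply ℂ ℂ (1 : ℂ)) (fderiv ℂ f y) := by
    funext y
    rw [ContinuousLinearMap.apply_apply]
    rfl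
  rw [he]
  exact h2

lemma AnalyticAt.itdC {f : ℂ → ℂ} {x : ℂ} (h : AnalyticAt ℂ f x) (n : ℕ) :
    AnalyticAt ℂ (iteratedDeriv n f) x := by
  induction n with
  | zero => simpa [iteratedDeriv_zero] using h
  | succ n ih => rw [iteratedDeriv_succ]; exact ih.derivC

lemma wdbar_iter {n : ℕ} (c : Fin n → ℂ) (g h : Fin n → ℂ → ℂ)
    (hg : ∀ i, AnalyticAt ℂ (g i) 0) (hh : ∀ i, AnalyticAt ℂ (h i) 0) (b : ℕ) :
    wdbar^[b] (fun s => ∑ i, c i * (g i s * (starRingEnd ℂ) (h i s))) =ᶠ[𝓝 0]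
      fun s => ∑ i, c i * (g i s * (starRingEnd ℂ) (iteratedDeriv b (h i) s)) := by
  induction b with
  | zero => simp only [Function.iterate_zero, id, iteratedDeriv_zero]
            exact Filter.EventuallyEq.rfl
  | succ b ih =>
    rw [Function.iterate_succ_apply']
    refine (wdbar_congr ih).trans ?_
    have hstep : wdbar (fun s => ∑ i, c i * (g i s * (starRingEnd ℂ) (iteratedDeriv b (h i) s)))
        =ᶠ[𝓝 0] fun s => ∑ i, c i * (g i s * (starRingEnd ℂ) (deriv (iteratedDeriv b (h i)) s)) := by
      have hg' : ∀ᶠ t in 𝓝 (0:ℂ), ∀ i, AnalyticAt ℂ (g i) t :=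
        eventually_all.2 fun i => (hg i).eventually_analyticAt
      have hh' : ∀ᶠ t in 𝓝 (0:ℂ), ∀ i, AnalyticAt ℂ (iteratedDeriv b (h i)) t :=
        eventually_all.2 fun i => ((hh i).itdC b).eventually_analyticAt
      filter_upwards [hg', hh'] with t h1 h2
      exact wdbar_sum_term c g (fun i => iteratedDeriv b (h i)) t
        (fun i => (h1 i).differentiableAt) (fun i => (h2 i).differentiableAt)
    refine hstep.trans ?_
    simp only [← iteratedDeriv_succ]
    exact Filter.EventuallyEq.rfl

lemma wd_iter {n : ℕ} (c : Fin n → ℂ) (g H : Fin n → ℂ → ℂ)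
    (hg : ∀ i, AnalyticAt ℂ (g i) 0) (hH : ∀ i, AnalyticAt ℂ (H i) 0) (a : ℕ) :
    wd^[a] (fun s => ∑ i, c i * (g i s * (starRingEnd ℂ) (H i s))) =ᶠ[𝓝 0]
      fun s => ∑ i, c i * (iteratedDeriv a (g i) s * (starRingEnd ℂ) (H i s)) := by
  induction a with
  | zero => simp only [Function.iterate_zero, id, iteratedDeriv_zero]
            exact Filter.EventuallyEq.rfl
  | succ a ih =>
    rw [Function.iterate_succ_apply']
    refine (wd_congr ih).trans ?_
    have hstep : wd (fun s => ∑ i, c i * (iteratedDeriv a (g i) s * (starRingEnd ℂ) (H i s)))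
        =ᶠ[𝓝 0] fun s => ∑ i, c i * (deriv (iteratedDeriv a (g i)) s * (starRingEnd ℂ) (H i s)) := by
      have hg' : ∀ᶠ t in 𝓝 (0:ℂ), ∀ i, AnalyticAt ℂ (iteratedDeriv a (g i)) t :=
        eventually_all.2 fun i => ((hg i).itdC a).eventually_analyticAt
      have hH' : ∀ᶠ t in 𝓝 (0:ℂ), ∀ i, AnalyticAt ℂ (H i) t :=
        eventually_all.2 fun i => (hH i).eventually_analyticAt
      filter_upwards [hg', hH'] with t h1 h2
      exact wd_sum_term c (fun i => iteratedDeriv a (g i)) H t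
        (fun i => (h1 i).differentiableAt) (fun i => (h2 i).differentiableAt)
    refine hstep.trans ?_
    simp only [← iteratedDeriv_succ]
    exact Filter.EventuallyEq.rfl

lemma Dab_rep {n : ℕ} (c : Fin n → ℂ) (g h : Fin n → ℂ → ℂ)
    (hg : ∀ i, AnalyticAt ℂ (g i) 0) (hh : ∀ i, AnalyticAt ℂ (h i) 0) (a b : ℕ) :
    Dab a b (fun s => ∑ i, c i * (g i s * (starRingEnd ℂ) (h i s))) 0
      = ∑ i, c i * (iteratedDeriv a (g i) 0 * (starRingEnd ℂ) (iteratedDeriv b (h i) 0)) := by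
  have h1 := wd_iterate_congr (wdbar_iter c g h hg hh b) a
  have h2 := wd_iter c g (fun i => iteratedDeriv b (h i)) hg (fun i => (hh i).itdC b) a
  exact (h1.trans h2).eq_of_nhds

lemma itd_const_succ (n : ℕ) (c : ℂ) :
    iteratedDeriv (n + 1) (fun _ : ℂ => c) = fun _ => (0 : ℂ) := by
  induction n with
  | zero => rw [iteratedDeriv_one]; exact deriv_const' c
  | succ n ih =>
    rw [iteratedDeriv_succ, ih]
    funext x
    exact deriv_const x 0

lemma itd_congr_ev {F G : ℂ → ℂ} {x : ℂ} (h : F =ᶠ[𝓝 x] G) (n : ℕ) :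
    iteratedDeriv n F =ᶠ[𝓝 x] iteratedDeriv n G := by
  induction n with
  | zero => simpa [iteratedDeriv_zero] using h
  | succ n ih => rw [iteratedDeriv_succ, iteratedDeriv_succ]; exact ih.deriv

lemma deriv_mul_ev {u v : ℂ → ℂ} (hu : AnalyticAt ℂ u 0) (hv : AnalyticAt ℂ v 0) :
    deriv (fun t => u t * v t) =ᶠ[𝓝 0] fun t => deriv u t * v t + u t * deriv v t := by
  filter_upwards [hu.eventually_analyticAt, hv.eventually_analyticAt] with t h1 h2
  exact deriv_mul h1.differentiableAt h2.differentiableAt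

lemma deriv_add_ev {u v : ℂ → ℂ} (hu : AnalyticAt ℂ u 0) (hv : AnalyticAt ℂ v 0) :
    deriv (fun t => u t + v t) =ᶠ[𝓝 0] fun t => deriv u t + deriv v t := by
  filter_upwards [hu.eventually_analyticAt, hv.eventually_analyticAt] with t h1 h2
  exact deriv_add h1.differentiableAt h2.differentiableAt

lemma itd_add_at {u v : ℂ → ℂ} (hu : AnalyticAt ℂ u 0) (hv : AnalyticAt ℂ v 0) (n : ℕ) :
    iteratedDeriv n (fun t => u t + v t) 0 = iteratedDeriv n u 0 + iteratedDeriv n v 0 := by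
  induction n generalizing u v with
  | zero => simp [iteratedDeriv_zero]
  | succ n ih =>
    rw [iteratedDeriv_succ', iteratedDeriv_succ', iteratedDeriv_succ',
      (itd_congr_ev (deriv_add_ev hu hv) n).eq_of_nhds]
    exact ih hu.derivC hv.derivC

lemma itd2_mul {u v : ℂ → ℂ} (hu : AnalyticAt ℂ u 0) (hv : AnalyticAt ℂ v 0) :
    iteratedDeriv 2 (fun t => u t * v t) 0
      = iteratedDeriv 2 u 0 * v 0 + 2 * deriv u 0 * deriv v 0 + u 0 * iteratedDeriv 2 v 0 := by
  have h1 : iteratedDeriv 2 (fun t => u t * v t) 0 = deriv (deriv (fun t => u t * v t)) 0 := by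
    rw [iteratedDeriv_succ, iteratedDeriv_one]
  rw [h1, (deriv_mul_ev hu hv).deriv_eq,
    deriv_fun_add ((hu.derivC.fun_mul hv).differentiableAt) ((hu.fun_mul hv.derivC).differentiableAt),
    deriv_fun_mul hu.derivC.differentiableAt hv.differentiableAt,
    deriv_fun_mul hu.differentiableAt hv.derivC.differentiableAt,
    iteratedDeriv_succ, iteratedDeriv_one, iteratedDeriv_succ, iteratedDeriv_one]
  ring

lemma itd3_mul {u v : ℂ → ℂ} (hu : AnalyticAt ℂ u 0) (hv : AnalyticAt ℂ v 0) :
    iteratedDeriv 3 (fun t => u t * v t) 0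
      = iteratedDeriv 3 u 0 * v 0 + 3 * iteratedDeriv 2 u 0 * deriv v 0
        + 3 * deriv u 0 * iteratedDeriv 2 v 0 + u 0 * iteratedDeriv 3 v 0 := by
  have h1 : iteratedDeriv 3 (fun t => u t * v t) 0
      = iteratedDeriv 2 (deriv (fun t => u t * v t)) 0 := by
    rw [iteratedDeriv_succ']
  rw [h1, (itd_congr_ev (deriv_mul_ev hu hv) 2).eq_of_nhds,
    itd_add_at (hu.derivC.fun_mul hv) (hu.fun_mul hv.derivC) 2,
    itd2_mul hu.derivC hv, itd2_mul hu hv.derivC]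
  have e1 : iteratedDeriv 2 (deriv u) 0 = iteratedDeriv 3 u 0 := by
    conv_rhs => rw [show (3:ℕ) = 2 + 1 from rfl, iteratedDeriv_succ']
  have e2 : iteratedDeriv 2 (deriv v) 0 = iteratedDeriv 3 v 0 := by
    conv_rhs => rw [show (3:ℕ) = 2 + 1 from rfl, iteratedDeriv_succ']
  have e3 : deriv (deriv u) 0 = iteratedDeriv 2 u 0 := by
    rw [iteratedDeriv_succ, iteratedDeriv_one]
  have e4 : deriv (deriv v) 0 = iteratedDeriv 2 v 0 := by
    rw [iteratedDeriv_succ, iteratedDeriv_one]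
  rw [e1, e2, e3, e4]
  ring

section Vanish
variable {u v : ℂ → ℂ} (hu : AnalyticAt ℂ u 0) (hv : AnalyticAt ℂ v 0)
  (h0u : u 0 = 0) (h0v : v 0 = 0)

include hu h0u in
lemma msq_d1 : deriv (fun t => u t * u t) 0 = 0 := by
  rw [deriv_fun_mul hu.differentiableAt hu.differentiableAt, h0u]; ring

include hu h0u in
lemma msq_d2 : iteratedDeriv 2 (fun t => u t * u t) 0 = 2 * (deriv u 0) ^ 2 := by
  rw [itd2_mul hu hu, h0u]; ring

include hu h0u in
lemma msq_d3 : iteratedDeriv 3 (fun t => u t * u t) 0 = 6 * deriv u 0 * iteratedDeriv 2 u 0 := by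
  rw [itd3_mul hu hu, h0u]; ring

include hu h0u in
lemma mcube_d1 : deriv (fun t => u t * (u t * u t)) 0 = 0 := by
  rw [deriv_fun_mul hu.differentiableAt (hu.fun_mul hu).differentiableAt, h0u]
  simp

include hu h0u in
lemma mcube_d2 : iteratedDeriv 2 (fun t => u t * (u t * u t)) 0 = 0 := by
  rw [itd2_mul hu (hu.fun_mul hu), h0u, msq_d1 hu h0u]
  simp [h0u]

include hu h0u in
lemma mcube_d3 : iteratedDeriv 3 (fun t => u t * (u t * u t)) 0 = 6 * (deriv u 0) ^ 3 := by
  rw [itd3_mul hu (hu.fun_mul hu), h0u, msq_d1 hu h0u, msq_d2 hu h0u]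
  simp [h0u]
  ring

include hu hv h0u h0v in
lemma mmix_d1 : deriv (fun t => u t * (v t * (v t * v t))) 0 = 0 := by
  rw [deriv_fun_mul hu.differentiableAt (hv.fun_mul (hv.fun_mul hv)).differentiableAt, h0u, h0v]
  simp

include hu hv h0u h0v in
lemma mmix_d2 : iteratedDeriv 2 (fun t => u t * (v t * (v t * v t))) 0 = 0 := by
  rw [itd2_mul hu (hv.fun_mul (hv.fun_mul hv)), h0u, mcube_d1 hv h0v, mcube_d2 hv h0v]
  simp [h0v]

include hu hv h0u h0v in
lemma mmix_d3 : iteratedDeriv 3 (fun t => u t * (v t * (v t * v t))) 0 = 0 := by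
  rw [itd3_mul hu (hv.fun_mul (hv.fun_mul hv)), h0u, mcube_d1 hv h0v, mcube_d2 hv h0v, mcube_d3 hv h0v]
  simp [h0v]

end Vanish

lemma coe_re (z : ℂ) : ((z.re : ℝ) : ℂ) = (z + (starRingEnd ℂ) z) / 2 := by
  rw [Complex.add_conj]; push_cast; ring

lemma coe_norm_sq (z : ℂ) : ((‖z‖ : ℝ) : ℂ) ^ 2 = z * (starRingEnd ℂ) z := by
  rw [← Complex.ofReal_pow, Complex.sq_norm, Complex.mul_conj]

lemma rDef_coe (z₁ z₂ z₃ : ℂ) :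
    ((rDef z₁ z₂ z₃ : ℝ) : ℂ)
      = (1/2) * (z₁ * (starRingEnd ℂ) 1) + (1/2) * (1 * (starRingEnd ℂ) z₁)
      + (1/2) * ((z₂*(z₂*z₂)) * (starRingEnd ℂ) z₂)
      + (1/2) * (z₂ * (starRingEnd ℂ) (z₂*(z₂*z₂)))
      + (-(1/2)) * ((z₂*(z₃*(z₃*z₃))) * (starRingEnd ℂ) z₂)
      + (-(1/2)) * (z₂ * (starRingEnd ℂ) (z₂*(z₃*(z₃*z₃))))
      + (1/2) * ((z₃*(z₃*z₃)) * (starRingEnd ℂ) z₃)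
      + (1/2) * (z₃ * (starRingEnd ℂ) (z₃*(z₃*z₃)))
      + (-(1/2)) * ((z₂*z₂) * (starRingEnd ℂ) z₃)
      + (-(1/2)) * (z₃ * (starRingEnd ℂ) (z₂*z₂)) := by
  unfold rDef
  simp only [Complex.ofReal_sub, Complex.ofReal_add, Complex.ofReal_mul, Complex.ofReal_pow,
    coe_re, coe_norm_sq, map_mul, map_sub, map_pow, map_one, Complex.conj_conj]
  ring

lemma part1 (γ : ℂ → ℂ × ℂ × ℂ) (hγ : AnalyticAt ℂ γ 0) (h0 : γ 0 = 0) (hd : deriv γ 0 ≠ 0) :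
    ∃ a b : ℕ, a + b ≤ 4 ∧
      Dab a b (fun t => ((rDef (γ t).1 (γ t).2.1 (γ t).2.2 : ℝ) : ℂ)) 0 ≠ 0 := by
  have hγ1 : AnalyticAt ℂ (fun t => (γ t).1) 0 :=
    ((ContinuousLinearMap.fst ℂ ℂ (ℂ × ℂ)).analyticAt (γ 0)).comp hγ
  have hγ23 : AnalyticAt ℂ (fun t => (γ t).2) 0 :=
    ((ContinuousLinearMap.snd ℂ ℂ (ℂ × ℂ)).analyticAt (γ 0)).comp hγ
  have hγ2 : AnalyticAt ℂ (fun t => (γ t).2.1) 0 :=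
    AnalyticAt.comp (f := fun t => (γ t).2)
      ((ContinuousLinearMap.fst ℂ ℂ ℂ).analyticAt ((γ 0).2)) hγ23
  have hγ3 : AnalyticAt ℂ (fun t => (γ t).2.2) 0 :=
    AnalyticAt.comp (f := fun t => (γ t).2)
      ((ContinuousLinearMap.snd ℂ ℂ ℂ).analyticAt ((γ 0).2)) hγ23
  have z1 : (γ (0:ℂ)).1 = 0 := by rw [h0]; rfl
  have z2 : (γ (0:ℂ)).2.1 = 0 := by rw [h0]; rfl
  have z3 : (γ (0:ℂ)).2.2 = 0 := by rw [h0]; rfl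
  set A := deriv (fun t => (γ t).1) 0 with hA_def
  set B := deriv (fun t => (γ t).2.1) 0 with hB_def
  set Cv := deriv (fun t => (γ t).2.2) 0 with hC_def
  have hdγ : HasDerivAt γ (deriv γ 0) 0 := hγ.differentiableAt.hasDerivAt
  have hd1 : HasDerivAt (fun t => (γ t).1) ((deriv γ 0).1) 0 :=
    (hasFDerivAt_fst (𝕜 := ℂ) (p := γ 0)).comp_hasDerivAt 0 hdγ
  have hdsnd : HasDerivAt (fun t => (γ t).2) ((deriv γ 0).2) 0 :=
    (hasFDerivAt_snd (𝕜 := ℂ) (p := γ 0)).comp_hasDerivAt 0 hdγ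
  have hd2 : HasDerivAt (fun t => (γ t).2.1) ((deriv γ 0).2.1) 0 :=
    by have := (hasFDerivAt_fst (𝕜 := ℂ) (p := (γ 0).2)).comp_hasDerivAt 0 hdsnd; exact this
  have hd3 : HasDerivAt (fun t => (γ t).2.2) ((deriv γ 0).2.2) 0 :=
    by have := (hasFDerivAt_snd (𝕜 := ℂ) (p := (γ 0).2)).comp_hasDerivAt 0 hdsnd; exact this
  have hABC : ¬(A = 0 ∧ B = 0 ∧ Cv = 0) := by
    rintro ⟨ha, hb, hc⟩
    apply hd
    have e1 : A = (deriv γ 0).1 := by rw [hA_def]; exact hd1.deriv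
    have e2 : B = (deriv γ 0).2.1 := by rw [hB_def]; exact hd2.deriv
    have e3 : Cv = (deriv γ 0).2.2 := by rw [hC_def]; exact hd3.deriv
    rw [Prod.ext_iff, Prod.ext_iff]
    exact ⟨by rw [← e1]; exact ha, by rw [← e2]; exact hb, by rw [← e3]; exact hc⟩
  set Cc : Fin 10 → ℂ := ![1/2, 1/2, 1/2, 1/2, -(1/2), -(1/2), 1/2, 1/2, -(1/2), -(1/2)]
    with hCc
  set G : Fin 10 → ℂ → ℂ :=
    ![fun t => (γ t).1, fun _ => 1,
      fun t => (γ t).2.1 * ((γ t).2.1 * (γ t).2.1), fun t => (γ t).2.1,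
      fun t => (γ t).2.1 * ((γ t).2.2 * ((γ t).2.2 * (γ t).2.2)), fun t => (γ t).2.1,
      fun t => (γ t).2.2 * ((γ t).2.2 * (γ t).2.2), fun t => (γ t).2.2,
      fun t => (γ t).2.1 * (γ t).2.1, fun t => (γ t).2.2] with hG
  set H : Fin 10 → ℂ → ℂ :=
    ![fun _ => 1, fun t => (γ t).1,
      fun t => (γ t).2.1, fun t => (γ t).2.1 * ((γ t).2.1 * (γ t).2.1),
      fun t => (γ t).2.1, fun t => (γ t).2.1 * ((γ t).2.2 * ((γ t).2.2 * (γ t).2.2)),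
      fun t => (γ t).2.2, fun t => (γ t).2.2 * ((γ t).2.2 * (γ t).2.2),
      fun t => (γ t).2.2, fun t => (γ t).2.1 * (γ t).2.1] with hH
  have hGa : ∀ i, AnalyticAt ℂ (G i) 0 := by
    intro i
    fin_cases i <;> simp only [hG, Matrix.cons_val_zero, Matrix.cons_val_one, Matrix.head_cons,
      Matrix.cons_val_succ]
    · exact hγ1
    · exact analyticAt_const
    · exact hγ2.mul (hγ2.mul hγ2)
    · exact hγ2
    · exact hγ2.mul (hγ3.mul (hγ3.mul hγ3))
    · exact hγ2
    · exact hγ3.mul (hγ3.mul hγ3)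
    · exact hγ3
    · exact hγ2.mul hγ2
    · exact hγ3
  have hHa : ∀ i, AnalyticAt ℂ (H i) 0 := by
    intro i
    fin_cases i <;> simp only [hH, Matrix.cons_val_zero, Matrix.cons_val_one, Matrix.head_cons,
      Matrix.cons_val_succ]
    · exact analyticAt_const
    · exact hγ1
    · exact hγ2
    · exact hγ2.mul (hγ2.mul hγ2)
    · exact hγ2
    · exact hγ2.mul (hγ3.mul (hγ3.mul hγ3))
    · exact hγ3
    · exact hγ3.mul (hγ3.mul hγ3)
    · exact hγ3
    · exact hγ2.mul hγ2
  have hrep : (fun t => ((rDef (γ t).1 (γ t).2.1 (γ t).2.2 : ℝ) : ℂ))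
      = fun s => ∑ i : Fin 10, Cc i * (G i s * (starRingEnd ℂ) (H i s)) := by
    funext s
    rw [rDef_coe]
    simp only [hCc, hG, hH, Fin.sum_univ_succ, Fin.sum_univ_zero, Matrix.cons_val_zero,
      Matrix.cons_val_succ, add_zero]
    ring
  by_cases hA : A ≠ 0
  · refine ⟨1, 0, by norm_num, ?_⟩
    rw [hrep, Dab_rep Cc G H hGa hHa 1 0]
    simp only [hCc, hG, hH, Fin.sum_univ_succ, Fin.sum_univ_zero, Matrix.cons_val_zero,
      Matrix.cons_val_succ, iteratedDeriv_one, iteratedDeriv_zero, z1, z2, z3]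
    simp only [map_zero, mul_zero, zero_mul, add_zero, zero_add, map_one, mul_one]
    rw [← hA_def]
    exact mul_ne_zero (by norm_num) hA
  push_neg at hA
  have m2c1 : deriv (fun t => (γ t).2.1 * ((γ t).2.1 * (γ t).2.1)) 0 = 0 := mcube_d1 hγ2 z2
  have m2c2 : iteratedDeriv 2 (fun t => (γ t).2.1 * ((γ t).2.1 * (γ t).2.1)) 0 = 0 :=
    mcube_d2 hγ2 z2
  have m2c3 : iteratedDeriv 3 (fun t => (γ t).2.1 * ((γ t).2.1 * (γ t).2.1)) 0 = 6 * B ^ 3 :=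
    mcube_d3 hγ2 z2
  have m3c1 : deriv (fun t => (γ t).2.2 * ((γ t).2.2 * (γ t).2.2)) 0 = 0 := mcube_d1 hγ3 z3
  have m3c2 : iteratedDeriv 2 (fun t => (γ t).2.2 * ((γ t).2.2 * (γ t).2.2)) 0 = 0 :=
    mcube_d2 hγ3 z3
  have m3c3 : iteratedDeriv 3 (fun t => (γ t).2.2 * ((γ t).2.2 * (γ t).2.2)) 0 = 6 * Cv ^ 3 :=
    mcube_d3 hγ3 z3
  have mx1 : deriv (fun t => (γ t).2.1 * ((γ t).2.2 * ((γ t).2.2 * (γ t).2.2))) 0 = 0 :=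
    mmix_d1 hγ2 hγ3 z2 z3
  have mx2 : iteratedDeriv 2 (fun t => (γ t).2.1 * ((γ t).2.2 * ((γ t).2.2 * (γ t).2.2))) 0 = 0 :=
    mmix_d2 hγ2 hγ3 z2 z3
  have mx3 : iteratedDeriv 3 (fun t => (γ t).2.1 * ((γ t).2.2 * ((γ t).2.2 * (γ t).2.2))) 0 = 0 :=
    mmix_d3 hγ2 hγ3 z2 z3
  have ms1 : deriv (fun t => (γ t).2.1 * (γ t).2.1) 0 = 0 := msq_d1 hγ2 z2
  have ms2 : iteratedDeriv 2 (fun t => (γ t).2.1 * (γ t).2.1) 0 = 2 * B ^ 2 := msq_d2 hγ2 z2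
  have ms3 : iteratedDeriv 3 (fun t => (γ t).2.1 * (γ t).2.1) 0
      = 6 * B * iteratedDeriv 2 (fun t => (γ t).2.1) 0 := msq_d3 hγ2 z2
  have hone : deriv (fun _ : ℂ => (1:ℂ)) 0 = 0 := deriv_const 0 1
  have hone2 : iteratedDeriv 2 (fun _ : ℂ => (1:ℂ)) 0 = 0 := by rw [itd_const_succ 1 1]
  have hone3 : iteratedDeriv 3 (fun _ : ℂ => (1:ℂ)) 0 = 0 := by rw [itd_const_succ 2 1]
  by_cases hB : B = 0
  · -- then Cv ≠ 0; use (3,1)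
    have hC : Cv ≠ 0 := fun hc => hABC ⟨hA, hB, hc⟩
    refine ⟨3, 1, by norm_num, ?_⟩
    rw [hrep, Dab_rep Cc G H hGa hHa 3 1]
    simp only [hCc, hG, hH, Fin.sum_univ_succ, Fin.sum_univ_zero, Matrix.cons_val_zero,
      Matrix.cons_val_succ, iteratedDeriv_one]
    rw [m2c3, m2c1, mx3, mx1, m3c3, m3c1, ms3, ms1, hone, hone3]
    simp only [map_zero, mul_zero, zero_mul, add_zero, zero_add]
    rw [← hB_def, ← hC_def]
    simp only [hB, zero_pow, mul_zero, zero_mul, ne_eq, OfNat.ofNat_ne_zero,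
      not_false_eq_true, zero_add, add_zero]
    have hcc : (starRingEnd ℂ) Cv ≠ 0 := by rw [starRingEnd_apply]; exact star_ne_zero.mpr hC
    intro hcontra
    apply hcc
    have h6 : (6 : ℂ) * Cv ^ 3 ≠ 0 := mul_ne_zero (by norm_num) (pow_ne_zero 3 hC)
    field_simp at hcontra
    simpa [hC] using hcontra
  · by_cases hC : Cv = 0
    · refine ⟨3, 1, by norm_num, ?_⟩
      rw [hrep, Dab_rep Cc G H hGa hHa 3 1]
      simp only [hCc, hG, hH, Fin.sum_univ_succ, Fin.sum_univ_zero, Matrix.cons_val_zero,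
        Matrix.cons_val_succ, iteratedDeriv_one]
      rw [m2c3, m2c1, mx3, mx1, m3c3, m3c1, ms3, ms1, hone, hone3]
      simp only [map_zero, mul_zero, zero_mul, add_zero, zero_add]
      rw [← hB_def, ← hC_def]
      simp only [hC, zero_pow, mul_zero, zero_mul, ne_eq, OfNat.ofNat_ne_zero,
        not_false_eq_true, zero_add, add_zero, map_zero]
      have hbb : (starRingEnd ℂ) B ≠ 0 := by rw [starRingEnd_apply]; exact star_ne_zero.mpr hB
      intro hcontra
      apply hbb
      field_simp at hcontra
      simpa [hB] using hcontra
    · refine ⟨2, 1, by norm_num, ?_⟩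
      rw [hrep, Dab_rep Cc G H hGa hHa 2 1]
      simp only [hCc, hG, hH, Fin.sum_univ_succ, Fin.sum_univ_zero, Matrix.cons_val_zero,
        Matrix.cons_val_succ, iteratedDeriv_one]
      rw [m2c2, m2c1, mx2, mx1, m3c2, m3c1, ms2, ms1, hone, hone2]
      simp only [map_zero, mul_zero, zero_mul, add_zero, zero_add]
      rw [← hC_def]
      have hcc : (starRingEnd ℂ) Cv ≠ 0 := by rw [starRingEnd_apply]; exact star_ne_zero.mpr hC
      intro hcontra
      apply hcc
      field_simp at hcontra
      simpa [hB] using hcontra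

lemma part3 (t : ℂ) : rDef 0 (t ^ 3) (t ^ 2) = 0 := by
  have h : ((rDef 0 (t ^ 3) (t ^ 2) : ℝ) : ℂ) = 0 := by
    rw [rDef_coe]
    simp only [map_mul, map_pow, map_one, map_zero]
    ring
  exact_mod_cast h

lemma part2 : ∃ γ : ℂ → ℂ × ℂ × ℂ, AnalyticAt ℂ γ 0 ∧ γ 0 = 0 ∧ deriv γ 0 ≠ 0 ∧
    (∀ a b : ℕ, a + b < 4 →
      Dab a b (fun t => ((rDef (γ t).1 (γ t).2.1 (γ t).2.2 : ℝ) : ℂ)) 0 = 0) ∧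
    (∃ a b : ℕ, a + b = 4 ∧
      Dab a b (fun t => ((rDef (γ t).1 (γ t).2.1 (γ t).2.2 : ℝ) : ℂ)) 0 ≠ 0) := by
  refine ⟨fun t => ((0:ℂ), t, (0:ℂ)), ?_, rfl, ?_, ?_, ?_⟩
  · exact analyticAt_const.prod (analyticAt_id.prod analyticAt_const)
  · have hD : HasDerivAt (fun t : ℂ => ((0:ℂ), t, (0:ℂ))) ((0:ℂ), (1:ℂ), (0:ℂ)) 0 :=
      (hasDerivAt_const 0 0).prodMk ((hasDerivAt_id 0).prodMk (hasDerivAt_const 0 0))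
    rw [hD.deriv]
    simp [Prod.ext_iff]
  all_goals {
    have hid : AnalyticAt ℂ (fun t : ℂ => t) 0 := analyticAt_id
    have did : deriv (fun x : ℂ => x) = fun _ => (1:ℂ) := funext fun x => deriv_id x
    have i_id1 : deriv (fun x : ℂ => x) 0 = 1 := deriv_id 0
    have i_id2 : iteratedDeriv 2 (fun x : ℂ => x) 0 = 0 := by
      rw [show (2:ℕ) = 1 + 1 from rfl, iteratedDeriv_succ', did, itd_const_succ 0 1]
    have i_id3 : iteratedDeriv 3 (fun x : ℂ => x) 0 = 0 := by
      rw [show (3:ℕ) = 2 + 1 from rfl, iteratedDeriv_succ', did, itd_const_succ 1 1]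
    have c1 : deriv (fun x : ℂ => x * (x * x)) 0 = 0 := mcube_d1 hid rfl
    have c2 : iteratedDeriv 2 (fun x : ℂ => x * (x * x)) 0 = 0 := mcube_d2 hid rfl
    have c3 : iteratedDeriv 3 (fun x : ℂ => x * (x * x)) 0 = 6 := by
      rw [mcube_d3 hid rfl, i_id1]; ring
    have hrep2 : (fun t : ℂ =>
          ((rDef ((fun s => ((0:ℂ), s, (0:ℂ))) t).1 ((fun s => ((0:ℂ), s, (0:ℂ))) t).2.1
            ((fun s => ((0:ℂ), s, (0:ℂ))) t).2.2 : ℝ) : ℂ))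
        = fun s => ∑ i : Fin 2, (![(1:ℂ)/2, 1/2] i)
            * ((![fun x : ℂ => x * (x * x), fun x : ℂ => x] i) s
              * (starRingEnd ℂ) ((![fun x : ℂ => x, fun x : ℂ => x * (x * x)] i) s)) := by
      funext s
      rw [rDef_coe]
      simp only [Fin.sum_univ_succ, Fin.sum_univ_zero, Matrix.cons_val_zero, Matrix.cons_val_succ,
        map_mul, map_pow, map_one, map_zero, add_zero]
      ring
    have hGa2 : ∀ i : Fin 2, AnalyticAt ℂ ((![fun x : ℂ => x * (x * x), fun x : ℂ => x]) i) 0 := by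
      intro i
      fin_cases i
      · exact hid.mul (hid.mul hid)
      · exact hid
    have hHa2 : ∀ i : Fin 2, AnalyticAt ℂ ((![fun x : ℂ => x, fun x : ℂ => x * (x * x)]) i) 0 := by
      intro i
      fin_cases i
      · exact hid
      · exact hid.mul (hid.mul hid)
    first
    | · -- vanishing for a + b < 4
        intro a b hab
        rw [hrep2, Dab_rep _ _ _ hGa2 hHa2 a b]
        simp only [Fin.sum_univ_succ, Fin.sum_univ_zero, Matrix.cons_val_zero, Matrix.cons_val_succ,
          add_zero]
        have ha : a ≤ 3 := by omega
        have hb : b ≤ 3 := by omega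
        interval_cases a <;> interval_cases b <;>
          simp_all [iteratedDeriv_zero, iteratedDeriv_one, i_id1, i_id2, i_id3, c1, c2, c3]
    | · refine ⟨3, 1, rfl, ?_⟩
        rw [hrep2, Dab_rep _ _ _ hGa2 hHa2 3 1]
        simp only [Fin.sum_univ_succ, Fin.sum_univ_zero, Matrix.cons_val_zero, Matrix.cons_val_succ,
          add_zero, iteratedDeriv_one]
        rw [c3, i_id1, i_id3, c1]
        norm_num
  }

/-- Every regular holomorphic curve through 0 has order of contact ≤ 4 with {r=0}, the value 4
is attained by a regular curve, and the curve t ↦ (0,t³,t²) lies in {r=0} (so the regular type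
of 0 is 4 while the singular type is infinite). -/
theorem stmt4 :
    (∀ γ : ℂ → ℂ × ℂ × ℂ, AnalyticAt ℂ γ 0 → γ 0 = 0 → deriv γ 0 ≠ 0 →
      ∃ a b : ℕ, a + b ≤ 4 ∧
        Dab a b (fun t => ((rDef (γ t).1 (γ t).2.1 (γ t).2.2 : ℝ) : ℂ)) 0 ≠ 0) ∧
    (∃ γ : ℂ → ℂ × ℂ × ℂ, AnalyticAt ℂ γ 0 ∧ γ 0 = 0 ∧ deriv γ 0 ≠ 0 ∧
      (∀ a b : ℕ, a + b < 4 →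
        Dab a b (fun t => ((rDef (γ t).1 (γ t).2.1 (γ t).2.2 : ℝ) : ℂ)) 0 = 0) ∧
      (∃ a b : ℕ, a + b = 4 ∧
        Dab a b (fun t => ((rDef (γ t).1 (γ t).2.1 (γ t).2.2 : ℝ) : ℂ)) 0 ≠ 0)) ∧
    (∀ t : ℂ, rDef 0 (t ^ 3) (t ^ 2) = 0) := by
  exact ⟨fun γ hγ h0 hd => part1 γ hγ h0 hd, part2, part3⟩
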